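/- Let t ∈ [0,a] and let (c_n) and (d_n) be sequences of dyadic points in D with c_n < d_n for all n, both converging to t. Then the difference quotients (x(c_n) − x(d_n))/(c_n − d_n) converge to f(t, x(t)) as n → ∞. -/

import Mathlib

open Filter Topology Set

lemma aux_memU (a M x₀ : ℝ) (ha : 0 < a) (hM : 0 < M)
    {m k : ℕ} (hk : k ≤ 2 ^ m) {y : ℝ} (hy : |y - x₀| ≤ M * (a * k / 2 ^ m)) :
    (a * k / 2 ^ m, y) ∈ Set.Icc (0 : ℝ) a ×ˢ Set.Icc (x₀ - M * a) (x₀ + M * a) := by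
  have h2 : (0:ℝ) < 2 ^ m := by positivity
  have hk' : (k : ℝ) ≤ 2 ^ m := by exact_mod_cast hk
  have hs1 : (0:ℝ) ≤ a * k / 2 ^ m := by positivity
  have hs2 : a * k / 2 ^ m ≤ a := by
    rw [div_le_iff₀ h2]
    nlinarith
  have hMs : M * (a * k / 2 ^ m) ≤ M * a := by nlinarith
  rw [abs_le] at hy
  constructor
  · exact ⟨hs1, hs2⟩
  · constructor <;> simp only [] <;> linarith

lemma aux_tube (a M x₀ : ℝ) (ha : 0 < a) (hM : 0 < M)
    (f : ℝ × ℝ → ℝ)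
    (hf_bdd : ∀ u ∈ Set.Icc (0:ℝ) a ×ˢ Set.Icc (x₀ - M*a) (x₀ + M*a), |f u| ≤ M)
    (X : ℕ → ℕ → ℝ) (hX0 : ∀ m, X m 0 = x₀)
    (hXs : ∀ m k, X m (k+1) = X m k + a / 2^m * f (a * k / 2^m, X m k)) :
    ∀ m k, k ≤ 2^m → |X m k - x₀| ≤ M * (a * k / 2 ^ m) := by
  intro m k
  induction k with
  | zero => intro _; simp [hX0]
  | succ k ih =>
    intro hk
    have hk' : k ≤ 2 ^ m := le_trans (Nat.le_succ k) hk
    have h1 := ih hk'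
    have hmem := aux_memU a M x₀ ha hM hk' h1
    have hfb := hf_bdd _ hmem
    have h2 : (0:ℝ) < 2 ^ m := by positivity
    have := hXs m k
    rw [this]
    have hstep : |a / 2 ^ m * f (a * k / 2 ^ m, X m k)| ≤ a / 2 ^ m * M := by
      rw [abs_mul, abs_of_pos (by positivity : (0:ℝ) < a / 2 ^ m)]
      exact mul_le_mul_of_nonneg_left hfb (by positivity)
    have : |X m k + a / 2 ^ m * f (a * k / 2 ^ m, X m k) - x₀|
        ≤ |X m k - x₀| + |a / 2 ^ m * f (a * k / 2 ^ m, X m k)| := by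
      have := abs_add_le (X m k - x₀) (a / 2 ^ m * f (a * k / 2 ^ m, X m k))
      calc _ = |(X m k - x₀) + a / 2 ^ m * f (a * k / 2 ^ m, X m k)| := by ring_nf
        _ ≤ _ := this
    refine this.trans ?_
    push_cast
    have : M * (a * (k + 1) / 2 ^ m) = M * (a * k / 2 ^ m) + a / 2 ^ m * M := by
      field_simp
    rw [this]
    linarith [hstep, h1]

lemma aux_step (a M x₀ : ℝ) (ha : 0 < a) (hM : 0 < M)
    (f : ℝ × ℝ → ℝ)
    (hf_bdd : ∀ u ∈ Set.Icc (0:ℝ) a ×ˢ Set.Icc (x₀ - M*a) (x₀ + M*a), |f u| ≤ M)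
    (X : ℕ → ℕ → ℝ) (hX0 : ∀ m, X m 0 = x₀)
    (hXs : ∀ m k, X m (k+1) = X m k + a / 2^m * f (a * k / 2^m, X m k)) :
    ∀ m k j, k ≤ j → j ≤ 2^m → |X m j - X m k| ≤ M * (a * ((j:ℝ) - k) / 2 ^ m) := by
  intro m k j hkj
  induction j, hkj using Nat.le_induction with
  | base => intro _; simp
  | succ j hkj ih =>
    intro hj
    have hj' : j ≤ 2 ^ m := le_trans (Nat.le_succ j) hj
    have h1 := ih hj'
    have htube := aux_tube a M x₀ ha hM f hf_bdd X hX0 hXs m j hj'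
    have hmem := aux_memU a M x₀ ha hM hj' htube
    have hfb := hf_bdd _ hmem
    rw [hXs m j]
    have hstep : |a / 2 ^ m * f (a * j / 2 ^ m, X m j)| ≤ a / 2 ^ m * M := by
      rw [abs_mul, abs_of_pos (by positivity : (0:ℝ) < a / 2 ^ m)]
      exact mul_le_mul_of_nonneg_left hfb (by positivity)
    have habs : |X m j + a / 2 ^ m * f (a * j / 2 ^ m, X m j) - X m k|
        ≤ |X m j - X m k| + |a / 2 ^ m * f (a * j / 2 ^ m, X m j)| := by
      have := abs_add_le (X m j - X m k) (a / 2 ^ m * f (a * j / 2 ^ m, X m j))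
      calc _ = |(X m j - X m k) + a / 2 ^ m * f (a * j / 2 ^ m, X m j)| := by ring_nf
        _ ≤ _ := this
    refine habs.trans ?_
    push_cast
    have heq : M * (a * ((j:ℝ) + 1 - k) / 2 ^ m) = M * (a * ((j:ℝ) - k) / 2 ^ m) + a / 2 ^ m * M := by
      field_simp; ring
    rw [heq]
    linarith

open Filter Topology Set

lemma aux_taylor (a M L x₀ : ℝ) (ha : 0 < a) (hM : 0 < M) (hL : 0 < L)
    (f : ℝ × ℝ → ℝ)
    (hf_lip : ∀ u ∈ Set.Icc (0:ℝ) a ×ˢ Set.Icc (x₀ - M*a) (x₀ + M*a),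
      ∀ v ∈ Set.Icc (0:ℝ) a ×ˢ Set.Icc (x₀ - M*a) (x₀ + M*a),
      |f u - f v| ≤ L * (|u.1 - v.1| + |u.2 - v.2|))
    (hf_bdd : ∀ u ∈ Set.Icc (0:ℝ) a ×ˢ Set.Icc (x₀ - M*a) (x₀ + M*a), |f u| ≤ M)
    (X : ℕ → ℕ → ℝ) (hX0 : ∀ m, X m 0 = x₀)
    (hXs : ∀ m k, X m (k+1) = X m k + a / 2^m * f (a * k / 2^m, X m k)) :
    ∀ m k j, k ≤ j → j ≤ 2^m →
      |X m j - X m k - a * ((j:ℝ) - k) / 2 ^ m * f (a * k / 2 ^ m, X m k)|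
        ≤ L * (1 + M) * (a * ((j:ℝ) - k) / 2 ^ m) ^ 2 := by
  intro m k j hkj
  induction j, hkj using Nat.le_induction with
  | base => intro _; simp
  | succ j hkj ih =>
    intro hj
    have hj' : j ≤ 2 ^ m := le_trans (Nat.le_succ j) hj
    have h1 := ih hj'
    have hkm : k ≤ 2 ^ m := le_trans hkj hj'
    have htubej := aux_tube a M x₀ ha hM f hf_bdd X hX0 hXs m j hj'
    have htubek := aux_tube a M x₀ ha hM f hf_bdd X hX0 hXs m k hkm
    have hmemj := aux_memU a M x₀ ha hM hj' htubej
    have hmemk := aux_memU a M x₀ ha hM hkm htubek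
    have hstep := aux_step a M x₀ ha hM f hf_bdd X hX0 hXs m k j hkj hj'
    have hlip := hf_lip _ hmemj _ hmemk
    simp only [] at hlip
    have h2 : (0:ℝ) < 2 ^ m := by positivity
    have hkj' : (k:ℝ) ≤ j := by exact_mod_cast hkj
    have hjk0 : (0:ℝ) ≤ (j:ℝ) - k := by linarith
    have habs1 : |a * j / 2 ^ m - a * k / 2 ^ m| = a * ((j:ℝ) - k) / 2 ^ m := by
      rw [show a * (j:ℝ) / 2 ^ m - a * k / 2 ^ m = a * ((j:ℝ) - k) / 2 ^ m by ring,
        abs_of_nonneg (by positivity)]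
    have hdiff : |f (a * j / 2 ^ m, X m j) - f (a * k / 2 ^ m, X m k)|
        ≤ L * (1 + M) * (a * ((j:ℝ) - k) / 2 ^ m) := by
      refine hlip.trans ?_
      rw [habs1]
      nlinarith [hstep, (by positivity : (0:ℝ) ≤ a * ((j:ℝ) - k) / 2 ^ m)]
    have hhpos : (0:ℝ) < a / 2 ^ m := by positivity
    have key : X m (j+1) - X m k - a * ((j:ℝ) + 1 - k) / 2 ^ m * f (a * k / 2 ^ m, X m k)
        = (X m j - X m k - a * ((j:ℝ) - k) / 2 ^ m * f (a * k / 2 ^ m, X m k))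
          + a / 2 ^ m * (f (a * j / 2 ^ m, X m j) - f (a * k / 2 ^ m, X m k)) := by
      rw [hXs m j]
      field_simp
      ring
    push_cast
    rw [key]
    refine (abs_add_le _ _).trans ?_
    have hsecond : |a / 2 ^ m * (f (a * j / 2 ^ m, X m j) - f (a * k / 2 ^ m, X m k))|
        ≤ a / 2 ^ m * (L * (1 + M) * (a * ((j:ℝ) - k) / 2 ^ m)) := by
      rw [abs_mul, abs_of_pos hhpos]
      exact mul_le_mul_of_nonneg_left hdiff (le_of_lt hhpos)
    have hrw1 : a * ((j:ℝ) - k) / 2 ^ m = a / 2 ^ m * ((j:ℝ) - k) := by ring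
    have hrw2 : a * ((j:ℝ) + 1 - k) / 2 ^ m = a / 2 ^ m * ((j:ℝ) - k + 1) := by ring
    rw [hrw1] at h1 hsecond ⊢
    rw [hrw2]
    nlinarith [h1, hsecond,
      mul_nonneg (mul_nonneg (mul_pos hL (by linarith : (0:ℝ) < 1 + M)).le
        (sq_nonneg (a / 2 ^ m))) (by linarith : (0:ℝ) ≤ (j:ℝ) - (k:ℝ) + 1)]
open Filter Topology Set

-- key lemma: for dyadic points with common denominator,
-- |x q - x p - (q-p) f(p, x p)| ≤ L(1+M)(q-p)^2
lemma aux_key (a M L x₀ : ℝ) (ha : 0 < a) (hM : 0 < M) (hL : 0 < L)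
    (f : ℝ × ℝ → ℝ)
    (hf_lip : ∀ u ∈ Set.Icc (0:ℝ) a ×ˢ Set.Icc (x₀ - M*a) (x₀ + M*a),
      ∀ v ∈ Set.Icc (0:ℝ) a ×ˢ Set.Icc (x₀ - M*a) (x₀ + M*a),
      |f u - f v| ≤ L * (|u.1 - v.1| + |u.2 - v.2|))
    (hf_bdd : ∀ u ∈ Set.Icc (0:ℝ) a ×ˢ Set.Icc (x₀ - M*a) (x₀ + M*a), |f u| ≤ M)
    (X : ℕ → ℕ → ℝ) (hX0 : ∀ m, X m 0 = x₀)
    (hXs : ∀ m k, X m (k+1) = X m k + a / 2^m * f (a * k / 2^m, X m k))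
    (x : ℝ → ℝ)
    (hx_dyadic : ∀ m k : ℕ, k ≤ 2 ^ m →
      Tendsto (fun n : ℕ => X (m + n) (2 ^ n * k)) atTop (𝓝 (x (a * k / 2 ^ m))))
    (m k j : ℕ) (hkj : k ≤ j) (hj : j ≤ 2 ^ m) :
    |x (a * j / 2 ^ m) - x (a * k / 2 ^ m)
      - a * ((j:ℝ) - k) / 2 ^ m * f (a * k / 2 ^ m, x (a * k / 2 ^ m))|
      ≤ L * (1 + M) * (a * ((j:ℝ) - k) / 2 ^ m) ^ 2 := by
  have hkm : k ≤ 2 ^ m := le_trans hkj hj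
  set p : ℝ := a * k / 2 ^ m with hp
  set q : ℝ := a * j / 2 ^ m with hq
  have hA := hx_dyadic m j hj
  have hB := hx_dyadic m k hkm
  have hcoordk : ∀ n : ℕ, a * ((2 ^ n * k : ℕ) : ℝ) / 2 ^ (m + n) = p := by
    intro n
    rw [hp, pow_add]
    push_cast
    field_simp
  have hcoordj : ∀ n : ℕ, a * ((2 ^ n * j : ℕ) : ℝ) / 2 ^ (m + n) = q := by
    intro n
    rw [hq, pow_add]
    push_cast
    field_simp
  have hcoordd : ∀ n : ℕ,
      a * (((2 ^ n * j : ℕ) : ℝ) - ((2 ^ n * k : ℕ) : ℝ)) / 2 ^ (m + n)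
        = a * ((j:ℝ) - k) / 2 ^ m := by
    intro n
    rw [pow_add]
    push_cast
    field_simp
  -- x p is in the tube
  have hxp_tube : |x p - x₀| ≤ M * p := by
    have hBn : ∀ n : ℕ, |X (m + n) (2 ^ n * k) - x₀| ≤ M * p := by
      intro n
      have hkn : 2 ^ n * k ≤ 2 ^ (m + n) := by
        rw [pow_add]
        calc 2 ^ n * k ≤ 2 ^ n * 2 ^ m := Nat.mul_le_mul_left _ hkm
          _ = 2 ^ m * 2 ^ n := Nat.mul_comm _ _
      have := aux_tube a M x₀ ha hM f hf_bdd X hX0 hXs (m + n) (2 ^ n * k) hkn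
      rwa [hcoordk n] at this
    have h1 : Tendsto (fun n : ℕ => |X (m + n) (2 ^ n * k) - x₀|) atTop (𝓝 (|x p - x₀|)) :=
      ((hB.sub tendsto_const_nhds).abs)
    exact le_of_tendsto h1 (Eventually.of_forall hBn)
  have hppos : 0 ≤ p := by positivity
  have hpa : p ≤ a := by
    rw [hp, div_le_iff₀ (by positivity : (0:ℝ) < 2 ^ m)]
    have : (k : ℝ) ≤ 2 ^ m := by exact_mod_cast hkm
    nlinarith
  have hmemxp : (p, x p) ∈ Set.Icc (0:ℝ) a ×ˢ Set.Icc (x₀ - M*a) (x₀ + M*a) := by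
    constructor
    · exact ⟨hppos, hpa⟩
    · rw [abs_le] at hxp_tube
      have : M * p ≤ M * a := by nlinarith
      constructor <;> simp only [] <;> linarith [hxp_tube.1, hxp_tube.2]
  -- f(p, B n) → f(p, x p)
  have hkn : ∀ n : ℕ, 2 ^ n * k ≤ 2 ^ (m + n) := by
    intro n
    rw [pow_add]
    calc 2 ^ n * k ≤ 2 ^ n * 2 ^ m := Nat.mul_le_mul_left _ hkm
      _ = 2 ^ m * 2 ^ n := Nat.mul_comm _ _
  have hjn : ∀ n : ℕ, 2 ^ n * j ≤ 2 ^ (m + n) := by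
    intro n
    rw [pow_add]
    calc 2 ^ n * j ≤ 2 ^ n * 2 ^ m := Nat.mul_le_mul_left _ hj
      _ = 2 ^ m * 2 ^ n := Nat.mul_comm _ _
  have hmemBn : ∀ n : ℕ, (p, X (m + n) (2 ^ n * k))
      ∈ Set.Icc (0:ℝ) a ×ˢ Set.Icc (x₀ - M*a) (x₀ + M*a) := by
    intro n
    have htube := aux_tube a M x₀ ha hM f hf_bdd X hX0 hXs (m + n) (2 ^ n * k) (hkn n)
    have := aux_memU a M x₀ ha hM (hkn n) htube
    rwa [hcoordk n] at this
  have hfB : Tendsto (fun n : ℕ => f (p, X (m + n) (2 ^ n * k))) atTop (𝓝 (f (p, x p))) := by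
    rw [← tendsto_sub_nhds_zero_iff]
    have hbound : ∀ n : ℕ, |f (p, X (m + n) (2 ^ n * k)) - f (p, x p)|
        ≤ L * |X (m + n) (2 ^ n * k) - x p| := by
      intro n
      have := hf_lip _ (hmemBn n) _ hmemxp
      simp only [sub_self, abs_zero, zero_add] at this
      exact this
    have hto0 : Tendsto (fun n : ℕ => L * |X (m + n) (2 ^ n * k) - x p|) atTop (𝓝 0) := by
      have : Tendsto (fun n : ℕ => |X (m + n) (2 ^ n * k) - x p|) atTop (𝓝 0) := by
        have := (hB.sub (tendsto_const_nhds : Tendsto (fun _ : ℕ => x p) atTop (𝓝 (x p)))).abs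
        simpa [hp] using this
      simpa using this.const_mul L
    exact squeeze_zero_norm (fun n => by simpa using hbound n) hto0
  -- pass to the limit in aux_taylor
  have hcomb : Tendsto (fun n : ℕ =>
      X (m + n) (2 ^ n * j) - X (m + n) (2 ^ n * k)
        - a * ((j:ℝ) - k) / 2 ^ m * f (p, X (m + n) (2 ^ n * k)))
      atTop (𝓝 (x q - x p - a * ((j:ℝ) - k) / 2 ^ m * f (p, x p))) :=
    (hA.sub hB).sub (hfB.const_mul _)
  have hbd : ∀ n : ℕ,
      |X (m + n) (2 ^ n * j) - X (m + n) (2 ^ n * k)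
        - a * ((j:ℝ) - k) / 2 ^ m * f (p, X (m + n) (2 ^ n * k))|
      ≤ L * (1 + M) * (a * ((j:ℝ) - k) / 2 ^ m) ^ 2 := by
    intro n
    have := aux_taylor a M L x₀ ha hM hL f hf_lip hf_bdd X hX0 hXs (m + n)
      (2 ^ n * k) (2 ^ n * j) (Nat.mul_le_mul_left _ hkj) (hjn n)
    rwa [hcoordk n, hcoordd n] at this
  exact le_of_tendsto hcomb.abs (Eventually.of_forall hbd)

/-- If (c_n), (d_n) are dyadic sequences with c_n < d_n both converging to
t ∈ [0,a], then (x(c_n) − x(d_n))/(c_n − d_n) → f(t, x(t)). -/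
theorem difference_quotients_tendsto
    (a M L x₀ : ℝ) (ha : 0 < a) (hM : 0 < M) (hL : 0 < L)
    (U : Set (ℝ × ℝ))
    (hU : U = Set.Icc (0 : ℝ) a ×ˢ Set.Icc (x₀ - M * a) (x₀ + M * a))
    (f : ℝ × ℝ → ℝ)
    (hf_lip : ∀ u ∈ U, ∀ v ∈ U, |f u - f v| ≤ L * (|u.1 - v.1| + |u.2 - v.2|))
    (hf_bdd : ∀ u ∈ U, |f u| ≤ M)
    (X : ℕ → ℕ → ℝ)
    (hX0 : ∀ m, X m 0 = x₀)
    (hXs : ∀ m k, X m (k + 1) = X m k + a / 2 ^ m * f (a * k / 2 ^ m, X m k))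
    (D : Set ℝ) (hD : D = {r : ℝ | ∃ m k : ℕ, k ≤ 2 ^ m ∧ r = a * k / 2 ^ m})
    (x : ℝ → ℝ)
    (hx_dyadic : ∀ m k : ℕ, k ≤ 2 ^ m →
      Tendsto (fun n : ℕ => X (m + n) (2 ^ n * k)) atTop (𝓝 (x (a * k / 2 ^ m))))
    (hx_lip : ∀ t ∈ Set.Icc (0 : ℝ) a, ∀ s ∈ Set.Icc (0 : ℝ) a, |x t - x s| ≤ M * |t - s|)
    (t : ℝ) (ht : t ∈ Set.Icc (0 : ℝ) a)
    (c d : ℕ → ℝ) (hc : ∀ n, c n ∈ D) (hd : ∀ n, d n ∈ D)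
    (hcd : ∀ n, c n < d n)
    (hct : Tendsto c atTop (𝓝 t)) (hdt : Tendsto d atTop (𝓝 t)) :
    Tendsto (fun n => (x (c n) - x (d n)) / (c n - d n)) atTop (𝓝 (f (t, x t))) := by
  subst hU hD
  -- x 0 = x₀
  have hx0 : x 0 = x₀ := by
    have h00 := hx_dyadic 0 0 (by norm_num)
    simp only [Nat.mul_zero, hX0, Nat.cast_zero, mul_zero, zero_div, pow_zero] at h00
    exact (tendsto_nhds_unique h00 tendsto_const_nhds)
  -- dyadic points lie in [0, a]
  have hDsub : ∀ r : ℝ, (∃ m k : ℕ, k ≤ 2 ^ m ∧ r = a * k / 2 ^ m) → r ∈ Set.Icc (0:ℝ) a := by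
    rintro r ⟨m, k, hk, rfl⟩
    have h2 : (0:ℝ) < 2 ^ m := by positivity
    have hk' : (k : ℝ) ≤ 2 ^ m := by exact_mod_cast hk
    constructor
    · positivity
    · rw [div_le_iff₀ h2]; nlinarith
  -- (s, x s) ∈ U for s ∈ [0, a]
  have hmemx : ∀ s ∈ Set.Icc (0:ℝ) a,
      (s, x s) ∈ Set.Icc (0:ℝ) a ×ˢ Set.Icc (x₀ - M*a) (x₀ + M*a) := by
    intro s hs
    have h0 : (0:ℝ) ∈ Set.Icc (0:ℝ) a := ⟨le_refl 0, ha.le⟩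
    have := hx_lip s hs 0 h0
    rw [hx0, sub_zero, abs_of_nonneg hs.1] at this
    have hMs : M * s ≤ M * a := by nlinarith [hs.2]
    rw [abs_le] at this
    exact ⟨hs, by constructor <;> simp only [] <;> linarith [this.1, this.2]⟩
  -- key estimate for general dyadic p < q
  have hkey2 : ∀ p q : ℝ, (∃ m k : ℕ, k ≤ 2 ^ m ∧ p = a * k / 2 ^ m) →
      (∃ m k : ℕ, k ≤ 2 ^ m ∧ q = a * k / 2 ^ m) → p < q →
      |x q - x p - (q - p) * f (p, x p)| ≤ L * (1 + M) * (q - p) ^ 2 := by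
    rintro p q ⟨m₁, k₁, hk₁, rfl⟩ ⟨m₂, k₂, hk₂, rfl⟩ hpq
    set m := m₁ + m₂ with hm
    set k := k₁ * 2 ^ m₂ with hk
    set j := k₂ * 2 ^ m₁ with hj
    have h2 : (0:ℝ) < 2 ^ m := by positivity
    have hpk : a * (k : ℝ) / 2 ^ m = a * k₁ / 2 ^ m₁ := by
      rw [hk, hm, pow_add]; push_cast; field_simp
    have hqj : a * (j : ℝ) / 2 ^ m = a * k₂ / 2 ^ m₂ := by
      rw [hj, hm, pow_add]; push_cast; field_simp
    have hjm : j ≤ 2 ^ m := by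
      rw [hj, hm, pow_add]
      calc k₂ * 2 ^ m₁ ≤ 2 ^ m₂ * 2 ^ m₁ := Nat.mul_le_mul_right _ hk₂
        _ = 2 ^ m₁ * 2 ^ m₂ := Nat.mul_comm _ _
    have hkj : k ≤ j := by
      have h1 : a * (k : ℝ) / 2 ^ m < a * (j : ℝ) / 2 ^ m := by rw [hpk, hqj]; exact hpq
      rw [div_lt_div_iff₀ h2 h2] at h1
      have h1' : (k : ℝ) * (a * 2 ^ m) < (j : ℝ) * (a * 2 ^ m) := by linear_combination h1
      have : (k : ℝ) < j := lt_of_mul_lt_mul_right h1' (mul_pos ha h2).le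
      exact_mod_cast this.le
    have hdeq : a * k₂ / 2 ^ m₂ - a * k₁ / 2 ^ m₁ = a * ((j:ℝ) - k) / 2 ^ m := by
      rw [← hpk, ← hqj]; ring
    have hkk := aux_key a M L x₀ ha hM hL f hf_lip hf_bdd X hX0 hXs x hx_dyadic m k j hkj hjm
    rw [hdeq, ← hpk, ← hqj]
    exact hkk
  -- per-n bound
  have hbnd : ∀ n : ℕ, |(x (c n) - x (d n)) / (c n - d n) - f (t, x t)|
      ≤ L * (1 + M) * ((d n - c n) + |c n - t|) := by
    intro n
    have hcn := hc n
    have hdn := hd n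
    have hcI : c n ∈ Set.Icc (0:ℝ) a := hDsub _ hcn
    have hdI : d n ∈ Set.Icc (0:ℝ) a := hDsub _ hdn
    have hqp : (0:ℝ) < d n - c n := by linarith [hcd n]
    have hk2 := hkey2 (c n) (d n) hcn hdn (hcd n)
    have heq : (x (c n) - x (d n)) / (c n - d n) = (x (d n) - x (c n)) / (d n - c n) := by
      rw [← neg_sub (x (d n)), ← neg_sub (d n), neg_div_neg_eq]
    have step1 : |(x (d n) - x (c n)) / (d n - c n) - f (c n, x (c n))|
        ≤ L * (1 + M) * (d n - c n) := by
      have hrw : (x (d n) - x (c n)) / (d n - c n) - f (c n, x (c n))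
          = (x (d n) - x (c n) - (d n - c n) * f (c n, x (c n))) / (d n - c n) := by
        field_simp
      rw [hrw, abs_div, abs_of_pos hqp, div_le_iff₀ hqp]
      calc |x (d n) - x (c n) - (d n - c n) * f (c n, x (c n))|
          ≤ L * (1 + M) * (d n - c n) ^ 2 := hk2
        _ = L * (1 + M) * (d n - c n) * (d n - c n) := by ring
    have step2 : |f (c n, x (c n)) - f (t, x t)| ≤ L * (1 + M) * |c n - t| := by
      have hlip := hf_lip _ (hmemx _ hcI) _ (hmemx _ ht)
      simp only [] at hlip
      have hxlip := hx_lip (c n) hcI t ht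
      calc |f (c n, x (c n)) - f (t, x t)| ≤ L * (|c n - t| + |x (c n) - x t|) := hlip
        _ ≤ L * (|c n - t| + M * |c n - t|) := by
            nlinarith [abs_nonneg (c n - t)]
        _ = L * (1 + M) * |c n - t| := by ring
    calc |(x (c n) - x (d n)) / (c n - d n) - f (t, x t)|
        = |((x (d n) - x (c n)) / (d n - c n) - f (c n, x (c n)))
            + (f (c n, x (c n)) - f (t, x t))| := by rw [heq]; ring_nf
      _ ≤ |(x (d n) - x (c n)) / (d n - c n) - f (c n, x (c n))|
            + |f (c n, x (c n)) - f (t, x t)| := abs_add_le _ _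
      _ ≤ L * (1 + M) * (d n - c n) + L * (1 + M) * |c n - t| := add_le_add step1 step2
      _ = L * (1 + M) * ((d n - c n) + |c n - t|) := by ring
  -- the bound tends to zero
  have h1 : Tendsto (fun n => d n - c n) atTop (𝓝 0) := by
    simpa using hdt.sub hct
  have h2 : Tendsto (fun n => |c n - t|) atTop (𝓝 0) := by
    have := (hct.sub (tendsto_const_nhds : Tendsto (fun _ : ℕ => t) atTop (𝓝 t))).abs
    simpa using this
  have hto0 : Tendsto (fun n => L * (1 + M) * ((d n - c n) + |c n - t|)) atTop (𝓝 0) := by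
    have := (h1.add h2).const_mul (L * (1 + M))
    simpa using this
  rw [← tendsto_sub_nhds_zero_iff]
  exact squeeze_zero_norm (fun n => by simpa using hbnd n) hto0
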